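/- Let π₁,…,πₙ > 0 and u₁,…,uₙ > 0 be real numbers, and let Q ∈ ℝ^{n×n} be a normally elliptic matrix satisfying the detailed-balance condition πᵢ·Q_{ij} = πⱼ·Q_{ji} for all i ≠ j. Define the diffusion matrix A by A_{ij} = uᵢ·Q_{ij} and the Hessian matrix H = diag(π₁/u₁,…,πₙ/uₙ). Then H·A, whose entries are (H·A)_{ij} = πᵢ·Q_{ij}, is symmetric positive definite. (This is the entropy structure of the fluid mixture model ∂ₜuᵢ = div(uᵢ∇pᵢ(u)) with Q_{ij} = ∂pᵢ/∂uⱼ and Boltzmann-type entropy density h(u) = Σᵢ πᵢuᵢ(log uᵢ − 1), whose Hessian is H.) -/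

import Mathlib

open Matrix

/-- A real square matrix is *normally elliptic* if every eigenvalue
(i.e. every element of the spectrum of the associated complex matrix)
has positive real part. -/
def NormallyElliptic {n : ℕ} (A : Matrix (Fin n) (Fin n) ℝ) : Prop :=
  ∀ μ ∈ spectrum ℂ (A.map Complex.ofReal), 0 < μ.re

/-- A (possibly nonsymmetric) real matrix is positive definite if `zᵀ M z > 0`
for all nonzero `z ∈ ℝⁿ`. -/
def PosDefMat {n : ℕ} (M : Matrix (Fin n) (Fin n) ℝ) : Prop :=
  ∀ z : Fin n → ℝ, z ≠ 0 → 0 < z ⬝ᵥ M.mulVec z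

/-- An eigenvalue (witnessed by an eigenvector) of a complex matrix lies in its spectrum. -/
lemma mem_spectrum_of_eigvec {n : ℕ} (M : Matrix (Fin n) (Fin n) ℂ) (μ : ℂ)
    (w : Fin n → ℂ) (hw : w ≠ 0) (h : M *ᵥ w = μ • w) : μ ∈ spectrum ℂ M := by
  rw [← AlgEquiv.spectrum_eq (Matrix.toLinAlgEquiv' (R := ℂ) (n := Fin n)),
    ← Module.End.hasEigenvalue_iff_mem_spectrum]
  refine Module.End.hasEigenvalue_of_hasEigenvector (x := w)
    ⟨Module.End.mem_eigenspace_iff.mpr ?_, hw⟩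
  simpa [Matrix.toLinAlgEquiv'_apply, Matrix.toLin'_apply] using h

theorem fluidMixture_entropyStructure {n : ℕ}
    (π u : Fin n → ℝ) (hπ : ∀ i, 0 < π i) (hu : ∀ i, 0 < u i)
    (Q : Matrix (Fin n) (Fin n) ℝ) (hQ : NormallyElliptic Q)
    (hdb : ∀ i j, i ≠ j → π i * Q i j = π j * Q j i) :
    (Matrix.diagonal (fun i => π i / u i) *
        Matrix.of (fun i j => u i * Q i j)).IsSymm ∧
      PosDefMat (Matrix.diagonal (fun i => π i / u i) *
        Matrix.of (fun i j => u i * Q i j)) := by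
  -- The product has entries `π i * Q i j`.
  have hM : (Matrix.diagonal (fun i => π i / u i) *
      Matrix.of (fun i j => u i * Q i j)) = Matrix.of (fun i j => π i * Q i j) := by
    ext i j
    simp only [Matrix.diagonal_mul, Matrix.of_apply]
    have hui : u i ≠ 0 := (hu i).ne'
    field_simp
  rw [hM]
  -- `d = √π`
  set d : Fin n → ℝ := fun i => Real.sqrt (π i) with hd_def
  have hd : ∀ i, 0 < d i := fun i => Real.sqrt_pos.mpr (hπ i)
  have hd2 : ∀ i, d i * d i = π i := fun i => Real.mul_self_sqrt (hπ i).le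
  -- the symmetrized matrix
  set S : Matrix (Fin n) (Fin n) ℝ := Matrix.of (fun i j => d i * Q i j * (d j)⁻¹) with hS_def
  have hdbS : ∀ i j, S j i = S i j := by
    intro i j
    rcases eq_or_ne i j with rfl | hij
    · rfl
    have h := hdb i j hij
    rw [← hd2 i, ← hd2 j] at h
    simp only [hS_def, Matrix.of_apply]
    have hdi := (hd i).ne'
    have hdj := (hd j).ne'
    field_simp
    nlinarith [h]
  have hSsym : S.IsHermitian := by
    ext i j
    simpa [Matrix.conjTranspose_apply] using hdbS i j
  -- eigenvalues of `S` are positive (they are eigenvalues of `Q`)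
  have key : ∀ (μ : ℝ) (v : Fin n → ℝ), v ≠ 0 → S *ᵥ v = μ • v → 0 < μ := by
    intro μ v hv hmv
    set w : Fin n → ℝ := fun j => (d j)⁻¹ * v j with hw_def
    have hw : w ≠ 0 := by
      intro h0
      apply hv
      funext j
      have := congrFun h0 j
      simp only [hw_def, Pi.zero_apply] at this
      have := mul_eq_zero.mp this
      rcases this with h | h
      · exact absurd h (inv_ne_zero (hd j).ne')
      · simpa using h
    have hQw : Q *ᵥ w = μ • w := by
      funext j
      have h1 : (S *ᵥ v) j = d j * (Q *ᵥ w) j := by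
        simp only [Matrix.mulVec, dotProduct, hS_def, hw_def, Matrix.of_apply,
          Finset.mul_sum]
        exact Finset.sum_congr rfl fun k _ => by ring
      have h2 := congrFun hmv j
      simp only [Pi.smul_apply, smul_eq_mul] at h2
      rw [h1] at h2
      have : (Q *ᵥ w) j = (d j)⁻¹ * (μ * v j) := by
        rw [eq_inv_mul_iff_mul_eq₀ (hd j).ne']
        exact h2
      rw [Pi.smul_apply, smul_eq_mul, this]
      simp only [hw_def]
      ring
    -- complexify
    set wc : Fin n → ℂ := fun j => (w j : ℂ) with hwc_def
    have hwc : wc ≠ 0 := by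
      intro h0
      apply hw
      funext j
      have := congrFun h0 j
      simpa [hwc_def] using this
    have hQwc : (Q.map Complex.ofReal) *ᵥ wc = (μ : ℂ) • wc := by
      funext j
      have := congrFun hQw j
      simp only [Matrix.mulVec, dotProduct, Pi.smul_apply, smul_eq_mul] at this ⊢
      simp only [Matrix.map_apply, hwc_def]
      exact_mod_cast congrArg (Complex.ofReal) this
    have := hQ (μ : ℂ) (mem_spectrum_of_eigvec _ _ wc hwc hQwc)
    simpa using this
  have hev : ∀ i, 0 < hSsym.eigenvalues i := by
    intro i
    refine key _ _ ?_ (hSsym.mulVec_eigenvectorBasis i)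
    have h0 : hSsym.eigenvectorBasis i ≠ 0 := hSsym.eigenvectorBasis.orthonormal.ne_zero i
    intro hcon
    apply h0
    ext j
    exact congrFun hcon j
  have hsd : S.PosSemidef := hSsym.posSemidef_iff_eigenvalues_nonneg.mpr fun i => (hev i).le
  constructor
  · -- symmetry
    ext i j
    simp only [Matrix.transpose_apply, Matrix.of_apply]
    rcases eq_or_ne j i with rfl | hij
    · rfl
    · exact hdb j i hij
  · -- positivity
    intro z hz
    set x : Fin n → ℝ := fun i => d i * z i with hx_def
    have hx : x ≠ 0 := by
      intro h0
      apply hz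
      funext j
      have := congrFun h0 j
      simp only [hx_def, Pi.zero_apply] at this
      rcases mul_eq_zero.mp this with h | h
      · exact absurd h (hd j).ne'
      · simpa using h
    have heq : z ⬝ᵥ (Matrix.of (fun i j => π i * Q i j)) *ᵥ z = x ⬝ᵥ S *ᵥ x := by
      simp only [dotProduct, Matrix.mulVec, hS_def, hx_def, Matrix.of_apply,
        Finset.mul_sum]
      refine Finset.sum_congr rfl fun i _ => Finset.sum_congr rfl fun j _ => ?_
      rw [← hd2 i]
      have hdj := (hd j).ne'
      field_simp
    rw [heq]
    have h0 : 0 ≤ x ⬝ᵥ S *ᵥ x := by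
      have := hsd.dotProduct_mulVec_nonneg x
      simpa using this
    rcases h0.lt_or_eq with h | h
    · exact h
    · exfalso
      have hzero : S *ᵥ x = 0 := by
        have := (hsd.dotProduct_mulVec_zero_iff x).mp ?_
        · exact this
        · simpa using h.symm
      have : (0 : ℝ) < 0 := key 0 x hx (by simp [hzero])
      exact absurd this (lt_irrefl 0)
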